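/- Let n ≥ 2, c > 0, and let L_u be the n×n Laplacian of the uniformly weighted line graph. For every integer k with 1 ≤ k ≤ n, the vector v_k ∈ ℝⁿ with entries v_k(j) = sin((2j−1)(2k−1)π/(4n)) for j = 1, …, n satisfies (L_u + 2c·e₁e₁ᵀ) v_k = 2c(1 − cos((2k−1)π/(2n))) v_k. Hence the DST-4 basis vectors are eigenvectors of the generalized graph Laplacian of the line graph with a self-loop of weight 2c at the first vertex. -/

import Mathlib

open Matrix Real

def lineLaplacian (n : ℕ) (c : ℝ) : Matrix (Fin n) (Fin n) ℝ :=
  Matrix.of fun i j =>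
    if i = j then (if i.val = 0 ∨ i.val = n - 1 then c else 2 * c)
    else if i.val + 1 = j.val ∨ j.val + 1 = i.val then -c else 0

private lemma sin_recur (a t : ℝ) :
    Real.sin (a - 2*t) + Real.sin (a + 2*t) = 2 * Real.cos (2*t) * Real.sin a := by
  rw [Real.sin_sub, Real.sin_add]; ring

private lemma entry_eval (n : ℕ) (c : ℝ) (hn : 2 ≤ n) (j x : Fin n) :
    (lineLaplacian n c
        + Matrix.single (⟨0, by omega⟩ : Fin n) (⟨0, by omega⟩ : Fin n) (2 * c)) j x
    = (if j = x then (if j.val = 0 ∨ j.val = n - 1 then c else 2 * c)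
        else if j.val + 1 = x.val ∨ x.val + 1 = j.val then -c else 0)
      + (if j.val = 0 ∧ x.val = 0 then 2 * c else 0) := by
  simp only [Matrix.add_apply, lineLaplacian, Matrix.of_apply, Matrix.single]
  congr 1
  by_cases h : j.val = 0 ∧ x.val = 0
  · rw [if_pos h, if_pos ⟨(Fin.ext h.1.symm), (Fin.ext h.2.symm)⟩]
  · rw [if_neg h, if_neg]
    intro ⟨h1, h2⟩
    exact h ⟨by rw [← h1], by rw [← h2]⟩

/-- DST-4 basis vectors are eigenvectors of the line graph Laplacian with a self-loop of weight `2c` at the first vertex. For `1 ≤ k ≤ n` the given vector is an eigenvector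
with the stated eigenvalue. -/
theorem dst4_eigenvectors (n : ℕ) (hn : 2 ≤ n) (c : ℝ) (hc : 0 < c)
    (k : ℕ) (hk1 : 1 ≤ k) (hk2 : k ≤ n) :
    (lineLaplacian n c + Matrix.single (⟨0, by omega⟩ : Fin n) ⟨0, by omega⟩ (2 * c)) *ᵥ
        (fun j : Fin n => Real.sin ((2 * (j : ℝ) + 1) * (2 * (k : ℝ) - 1) * Real.pi / (4 * n))) =
      (2 * c * (1 - Real.cos ((2 * (k : ℝ) - 1) * Real.pi / (2 * n)))) •
        (fun j : Fin n => Real.sin ((2 * (j : ℝ) + 1) * (2 * (k : ℝ) - 1) * Real.pi / (4 * n))) := by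
  have hn0 : (n:ℝ) ≠ 0 := by positivity
  set t : ℝ := (2*(k:ℝ)-1) * Real.pi / (4*n) with ht
  have harg : ∀ i : Fin n, (2 * (i : ℝ) + 1) * (2 * (k : ℝ) - 1) * Real.pi / (4 * n)
      = (2*(i:ℝ)+1) * t := by intro i; rw [ht]; ring
  have hcos : (2*(k:ℝ)-1) * Real.pi / (2*n) = 2*t := by rw [ht]; ring
  funext j
  simp only [Matrix.mulVec, dotProduct, Pi.smul_apply, smul_eq_mul, harg, hcos,
    entry_eval n c hn j]
  set g : Fin n → ℝ := fun x =>
    ((if j = x then (if j.val = 0 ∨ j.val = n - 1 then c else 2 * c)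
        else if j.val + 1 = x.val ∨ x.val + 1 = j.val then -c else 0)
      + (if j.val = 0 ∧ x.val = 0 then 2 * c else 0)) * Real.sin ((2*(x:ℝ)+1)*t) with hg
  show ∑ x, g x = 2 * c * (1 - Real.cos (2*t)) * Real.sin ((2*(j:ℝ)+1)*t)
  have hgz : ∀ x : Fin n, x.val ≠ j.val → x.val + 1 ≠ j.val → j.val + 1 ≠ x.val → g x = 0 := by
    intro x h1 h2 h3
    have hjx : j ≠ x := fun h => h1 (by rw [h])
    have hb : ¬(j.val = 0 ∧ x.val = 0) := fun h => h1 (by omega)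
    simp only [hg]
    rw [if_neg hjx, if_neg (show ¬(j.val + 1 = x.val ∨ x.val + 1 = j.val) by omega), if_neg hb]
    ring
  by_cases hj0 : j.val = 0
  · -- first row
    set i1 : Fin n := ⟨1, by omega⟩ with hi1
    have hi1v : (i1:ℕ) = 1 := rfl
    have hne : j ≠ i1 := by simp only [ne_eq, Fin.ext_iff, hi1v]; omega
    have hsub : ∑ x, g x = ∑ x ∈ ({j, i1} : Finset (Fin n)), g x := by
      refine (Finset.sum_subset (Finset.subset_univ _) ?_).symm
      intro x _ hx
      simp only [Finset.mem_insert, Finset.mem_singleton, not_or] at hx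
      have hx1 : x.val ≠ j.val := fun h => hx.1 (Fin.ext h)
      have hx2 : x.val ≠ i1.val := fun h => hx.2 (Fin.ext h)
      exact hgz x hx1 (by omega) (by omega)
    rw [hsub, Finset.sum_pair hne]
    simp only [hg, Fin.ext_iff, eq_self_iff_true, if_true, if_false, and_false, false_and, and_true, true_and, or_false, false_or, true_or, or_true, Nat.one_ne_zero, hi1v, Nat.cast_one, Nat.cast_ofNat]
    split_ifs <;> try (exfalso; omega)
    rw [show ((j:ℕ):ℝ) = 0 by rw [hj0]; norm_num]
    have h3 := sin_recur t t
    rw [show t - 2*t = -t by ring, Real.sin_neg] at h3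
    rw [show (2*(1:ℝ)+1)*t = t + 2*t by ring, show (2*(0:ℝ)+1)*t = t by ring]
    linear_combination (-c) * h3
  · by_cases hjn : j.val = n - 1
    · -- last row
      set im : Fin n := ⟨n-2, by omega⟩ with him
      have himv : (im:ℕ) = n - 2 := rfl
      have hne : j ≠ im := by simp only [ne_eq, Fin.ext_iff, himv]; omega
      have hsub : ∑ x, g x = ∑ x ∈ ({j, im} : Finset (Fin n)), g x := by
        refine (Finset.sum_subset (Finset.subset_univ _) ?_).symm
        intro x _ hx
        simp only [Finset.mem_insert, Finset.mem_singleton, not_or] at hx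
        have hx1 : x.val ≠ j.val := fun h => hx.1 (Fin.ext h)
        have hx2 : x.val ≠ im.val := fun h => hx.2 (Fin.ext h)
        have hxlt : x.val < n := x.isLt
        exact hgz x hx1 (by omega) (by omega)
      rw [hsub, Finset.sum_pair hne]
      simp only [hg, Fin.ext_iff, eq_self_iff_true, if_true, if_false, and_false, false_and, and_true, true_and, or_false, false_or, true_or, or_true, Nat.one_ne_zero, himv]
      split_ifs <;> try (exfalso; omega)
      rw [show ((j:ℕ):ℝ) = (n:ℝ) - 1 by
          rw [hjn]; push_cast [Nat.cast_sub (by omega : 1 ≤ n)]; ring,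
        show (((n-2 : ℕ):ℕ):ℝ) = (n:ℝ) - 2 by
          push_cast [Nat.cast_sub (by omega : 2 ≤ n)]; ring]
      set a : ℝ := (2*((n:ℝ)-1)+1)*t with ha
      rw [show (2*((n:ℝ)-2)+1)*t = a - 2*t by rw [ha]; ring]
      have hrec := sin_recur a t
      have hb : (2*(n:ℝ))*t = (2*(k:ℝ)-1)*Real.pi/2 := by
        rw [ht]; field_simp; ring
      have hcb : Real.cos ((2*(k:ℝ)-1)*Real.pi/2) = 0 := by
        rw [show (2*(k:ℝ)-1)*Real.pi/2 = (k:ℝ)*Real.pi - Real.pi/2 by ring,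
          Real.cos_sub, Real.cos_pi_div_two, Real.sin_pi_div_two, Real.sin_nat_mul_pi]
        ring
      have hsame : Real.sin (a + 2*t) = Real.sin a := by
        have e1 : Real.sin (a + 2*t) = Real.sin ((2*(n:ℝ))*t + t) := by
          congr 1; rw [ha]; ring
        have e2 : Real.sin a = Real.sin ((2*(n:ℝ))*t - t) := by
          congr 1; rw [ha]; ring
        rw [e1, e2, hb, Real.sin_add, Real.sin_sub, hcb]; ring
      linear_combination (-c) * hrec + c * hsame
    · -- interior row
      have hj1 : 1 ≤ j.val := by omega
      have hj2 : j.val + 1 < n := by omega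
      set im : Fin n := ⟨j.val - 1, by omega⟩ with him
      set ip : Fin n := ⟨j.val + 1, hj2⟩ with hip
      have himv : (im:ℕ) = j.val - 1 := rfl
      have hipv : (ip:ℕ) = j.val + 1 := rfl
      have hne1 : im ≠ j := by simp only [ne_eq, Fin.ext_iff, himv]; omega
      have hne2 : im ≠ ip := by simp only [ne_eq, Fin.ext_iff, himv, hipv]; omega
      have hne3 : j ≠ ip := by simp only [ne_eq, Fin.ext_iff, hipv]; omega
      have hsub : ∑ x, g x = ∑ x ∈ ({im, j, ip} : Finset (Fin n)), g x := by
        refine (Finset.sum_subset (Finset.subset_univ _) ?_).symm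
        intro x _ hx
        simp only [Finset.mem_insert, Finset.mem_singleton, not_or] at hx
        have hx1 : x.val ≠ im.val := fun h => hx.1 (Fin.ext h)
        have hx2 : x.val ≠ j.val := fun h => hx.2.1 (Fin.ext h)
        have hx3 : x.val ≠ ip.val := fun h => hx.2.2 (Fin.ext h)
        exact hgz x hx2 (by omega) (by omega)
      rw [hsub, Finset.sum_insert (by
            simp only [Finset.mem_insert, Finset.mem_singleton]
            rintro (h | h)
            exacts [hne1 h, hne2 h]),
        Finset.sum_insert (by
            simp only [Finset.mem_singleton]
            exact hne3),
        Finset.sum_singleton]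
      simp only [hg, Fin.ext_iff, eq_self_iff_true, if_true, if_false, and_false, false_and, and_true, true_and, or_false, false_or, true_or, or_true, Nat.one_ne_zero, himv, hipv]
      split_ifs <;> try (exfalso; omega)
      rw [show (((j.val - 1 : ℕ)):ℝ) = ((j:ℕ):ℝ) - 1 by
          push_cast [Nat.cast_sub hj1]; ring,
        show (((j.val + 1 : ℕ)):ℝ) = ((j:ℕ):ℝ) + 1 by push_cast; ring]
      set a : ℝ := (2*((j:ℕ):ℝ)+1)*t with ha
      rw [show (2*(((j:ℕ):ℝ)-1)+1)*t = a - 2*t by rw [ha]; ring,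
        show (2*(((j:ℕ):ℝ)+1)+1)*t = a + 2*t by rw [ha]; ring]
      have hrec := sin_recur a t
      linear_combination (-c) * hrec
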